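/- For α, β > -1, n ≥ 1, and x ∈ [0,1], the second moment of the Beta operator is T_{n,2}^{α,β}(x) = [(α+1)(α+2) + (n - 2(α+1)(α+β+3))x + (-n + 6 + (α+β)(α+β+5))x²] / [(n+α+β+2)(n+α+β+3)]. -/

import Mathlib

open MeasureTheory intervalIntegral Filter


open MeasureTheory intervalIntegral Filter

/-- The Beta operator with Jacobi weights: `B_n^{α,β}(f;x)`. -/
noncomputable def Bop (n α β : ℝ) (f : ℝ → ℝ) (x : ℝ) : ℝ :=
  (∫ t in (0:ℝ)..1, t ^ (n * x + α) * (1 - t) ^ (n - n * x + β) * f t) /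
  (∫ t in (0:ℝ)..1, t ^ (n * x + α) * (1 - t) ^ (n - n * x + β))

/-- The `m`-th central moment `T_{n,m}^{α,β}(x)`. -/
noncomputable def T (n α β : ℝ) (m : ℕ) (x : ℝ) : ℝ :=
  Bop n α β (fun t => (t - x) ^ m) x

lemma realBeta (p q : ℝ) (hp : -1 < p) (hq : -1 < q) :
    ∫ t in (0:ℝ)..1, t ^ p * (1 - t) ^ q =
      Real.Gamma (p + 1) * Real.Gamma (q + 1) / Real.Gamma (p + q + 2) := by
  have hp1 : (0:ℝ) < p + 1 := by linarith
  have hq1 : (0:ℝ) < q + 1 := by linarith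
  have key := Complex.Gamma_mul_Gamma_eq_betaIntegral
    (s := (p:ℂ) + 1) (t := (q:ℂ) + 1) (by simpa using hp1) (by simpa using hq1)
  have hbeta : Complex.betaIntegral ((p:ℂ)+1) ((q:ℂ)+1)
      = ((∫ t in (0:ℝ)..1, t ^ p * (1 - t) ^ q : ℝ) : ℂ) := by
    rw [Complex.betaIntegral, ← intervalIntegral.integral_ofReal]
    apply intervalIntegral.integral_congr
    intro t ht
    rw [Set.uIcc_of_le (by norm_num)] at ht
    obtain ⟨h0, h1⟩ := ht
    have h1' : (0:ℝ) ≤ 1 - t := by linarith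
    push_cast
    rw [Complex.ofReal_cpow h0, Complex.ofReal_cpow h1']
    push_cast
    ring_nf
  rw [hbeta] at key
  have hG : Real.Gamma (p + q + 2) ≠ 0 := (Real.Gamma_pos_of_pos (by linarith)).ne'
  rw [eq_div_iff hG, ← Complex.ofReal_inj]
  push_cast [← Complex.Gamma_ofReal]
  rw [mul_comm]
  convert key.symm using 3 <;> push_cast <;> ring

lemma realBetaInt (p q : ℝ) (hp : -1 < p) (hq : -1 < q) :
    IntervalIntegrable (fun t : ℝ => t ^ p * (1 - t) ^ q) volume 0 1 := by
  have hp1 : (0:ℝ) < p + 1 := by linarith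
  have hq1 : (0:ℝ) < q + 1 := by linarith
  have h := Complex.betaIntegral_convergent (u := (p:ℂ)+1) (v := (q:ℂ)+1)
    (by simpa using hp1) (by simpa using hq1)
  have h2 : IntervalIntegrable (fun x : ℝ =>
      (((x:ℂ) ^ ((p:ℂ)+1-1) * (1 - (x:ℂ)) ^ ((q:ℂ)+1-1)).re)) volume 0 1 :=
    ⟨h.1.re, h.2.re⟩
  refine h2.congr ?_
  rw [Set.uIoc_of_le (by norm_num : (0:ℝ) ≤ 1)]
  intro t ht
  dsimp only
  obtain ⟨h0, h1⟩ := ht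
  have h0' : (0:ℝ) ≤ t := h0.le
  have h1' : (0:ℝ) ≤ 1 - t := by linarith
  have e1 : ((p:ℂ) + 1 - 1) = ((p:ℝ) : ℂ) := by ring
  have e2 : ((q:ℂ) + 1 - 1) = ((q:ℝ) : ℂ) := by ring
  rw [e1, e2, ← Complex.ofReal_cpow h0', ← Complex.ofReal_one, ← Complex.ofReal_sub,
    ← Complex.ofReal_cpow h1', ← Complex.ofReal_mul, Complex.ofReal_re]
theorem second_moment (α β : ℝ) (hα : α > -1) (hβ : β > -1)
    (n : ℕ) (hn : 1 ≤ n) (x : ℝ) (hx : x ∈ Set.Icc (0:ℝ) 1) :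
    T n α β 2 x =
      ((α + 1) * (α + 2) + (n - 2 * (α + 1) * (α + β + 3)) * x +
          (-(n:ℝ) + 6 + (α + β) * (α + β + 5)) * x ^ 2) /
        ((n + α + β + 2) * (n + α + β + 3)) := by
  obtain ⟨hx0, hx1⟩ := hx
  have hN : (1:ℝ) ≤ (n:ℝ) := by exact_mod_cast hn
  set N : ℝ := (n:ℝ) with hNdef
  set a : ℝ := N * x + α with hadef
  set b : ℝ := N - N * x + β with hbdef
  have ha : -1 < a := by nlinarith [mul_nonneg (by linarith : (0:ℝ) ≤ N) hx0]
  have hb : -1 < b := by nlinarith [mul_nonneg (by linarith : (0:ℝ) ≤ N) (by linarith : (0:ℝ) ≤ 1 - x)]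
  have ha1 : -1 < a + 1 := by linarith
  have ha2 : -1 < a + 2 := by linarith
  have hs : a + b = N + α + β := by rw [hadef, hbdef]; ring
  -- rewrite the numerator integrand
  have hnum : (∫ t in (0:ℝ)..1, t ^ a * (1 - t) ^ b * (t - x) ^ 2)
      = (∫ t in (0:ℝ)..1, t ^ (a + 2) * (1 - t) ^ b)
        - 2 * x * (∫ t in (0:ℝ)..1, t ^ (a + 1) * (1 - t) ^ b)
        + x ^ 2 * (∫ t in (0:ℝ)..1, t ^ a * (1 - t) ^ b) := by
    rw [← intervalIntegral.integral_const_mul, ← intervalIntegral.integral_const_mul,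
      ← intervalIntegral.integral_sub ((realBetaInt (a+2) b ha2 hb))
        (((realBetaInt (a+1) b ha1 hb)).const_mul (2*x)),
      ← intervalIntegral.integral_add
        (((realBetaInt (a+2) b ha2 hb)).sub (((realBetaInt (a+1) b ha1 hb)).const_mul (2*x)))
        (((realBetaInt a b ha hb)).const_mul (x^2))]
    apply intervalIntegral.integral_congr
    intro t ht
    dsimp only
    rw [Set.uIcc_of_le (by norm_num)] at ht
    rcases eq_or_lt_of_le ht.1 with h0 | h0
    · rw [← h0]
      rw [Real.zero_rpow (by linarith : a + 2 ≠ 0), Real.zero_rpow (by linarith : a + 1 ≠ 0)]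
      ring
    · have e1 : t ^ (a + 1) = t ^ a * t := by
        rw [Real.rpow_add h0, Real.rpow_one]
      have e2 : t ^ (a + 2) = t ^ a * t ^ 2 := by
        rw [Real.rpow_add h0, Real.rpow_two]
      rw [e1, e2]; ring
  have g1pos := Real.Gamma_pos_of_pos (by linarith : (0:ℝ) < a + 1)
  have g2pos := Real.Gamma_pos_of_pos (by linarith : (0:ℝ) < b + 1)
  have hs2 : (0:ℝ) < a + b + 2 := by linarith
  have hs3 : (0:ℝ) < a + b + 3 := by linarith
  have G2pos := Real.Gamma_pos_of_pos hs2
  have hI0 : (∫ t in (0:ℝ)..1, t ^ a * (1 - t) ^ b)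
      = Real.Gamma (a+1) * Real.Gamma (b+1) / Real.Gamma (a+b+2) := realBeta a b ha hb
  have hI1 : (∫ t in (0:ℝ)..1, t ^ (a+1) * (1 - t) ^ b)
      = (a+1) * Real.Gamma (a+1) * Real.Gamma (b+1) / ((a+b+2) * Real.Gamma (a+b+2)) := by
    rw [realBeta (a+1) b ha1 hb,
      show a + 1 + 1 = (a + 1) + 1 by ring, Real.Gamma_add_one (by linarith : a + 1 ≠ 0),
      show a + 1 + b + 2 = (a + b + 2) + 1 by ring, Real.Gamma_add_one hs2.ne']
  have hI2 : (∫ t in (0:ℝ)..1, t ^ (a+2) * (1 - t) ^ b)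
      = (a+2) * ((a+1) * Real.Gamma (a+1)) * Real.Gamma (b+1)
        / ((a+b+3) * ((a+b+2) * Real.Gamma (a+b+2))) := by
    rw [realBeta (a+2) b ha2 hb,
      show a + 2 + 1 = (a + 1 + 1) + 1 by ring, Real.Gamma_add_one (by linarith : a + 1 + 1 ≠ 0),
      show a + 1 + 1 = (a + 1) + 1 by ring, Real.Gamma_add_one (by linarith : a + 1 ≠ 0),
      show a + 2 + b + 2 = ((a + b + 2) + 1) + 1 by ring,
      Real.Gamma_add_one (by linarith : a + b + 2 + 1 ≠ 0), Real.Gamma_add_one hs2.ne',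
      show a + b + 2 + 1 = a + b + 3 by ring]
    ring_nf
  have hNs2 : N + α + β + 2 ≠ 0 := by rw [← hs]; linarith
  have hNs3 : N + α + β + 3 ≠ 0 := by rw [← hs]; linarith
  simp only [T, Bop, ← hNdef, ← hadef, ← hbdef]
  rw [hnum, hI0, hI1, hI2, hs]
  have h2 : N + α + β + 2 > 0 := by rw [← hs]; exact hs2
  have h3 : N + α + β + 3 > 0 := by rw [← hs]; exact hs3
  rw [show a + b + 3 = N + α + β + 3 from by rw [hs], show a + b + 2 = N + α + β + 2 from by rw [hs]] at *
  field_simp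
  rw [hadef]
  ring
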